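/- Let $M$ be a compact metric space and $f\colon M\to M$ a homeomorphism. Then $B(f,C^0(M)) = \{u\circ f - u : u\in C^0(M)\}$ is closed in $C^0(M)$ if and only if $f$ is periodic, i.e. $f^q=\mathrm{id}_M$ for some positive integer $q$. -/

import Mathlib

open Finset

lemma closed_of_periodic {M : Type*} [MetricSpace M] [CompactSpace M]
    (f : M ≃ₜ M) (q : ℕ) (hq1 : 1 ≤ q) (hq : (⇑f)^[q] = id) :
    IsClosed {φ : C(M, ℝ) | ∃ u : C(M, ℝ), ∀ x, φ x = u (f x) - u x} := by
  have hset : {φ : C(M, ℝ) | ∃ u : C(M, ℝ), ∀ x, φ x = u (f x) - u x}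
      = ⋂ x : M, {φ : C(M, ℝ) | ∑ k ∈ range q, φ ((⇑f)^[k] x) = 0} := by
    ext φ
    simp only [Set.mem_setOf_eq, Set.mem_iInter]
    constructor
    · rintro ⟨u, hu⟩ x
      calc ∑ k ∈ range q, φ ((⇑f)^[k] x)
          = ∑ k ∈ range q, (u ((⇑f)^[k+1] x) - u ((⇑f)^[k] x)) :=
            Finset.sum_congr rfl (fun k _ => by rw [Function.iterate_succ_apply']; exact hu _)
        _ = u ((⇑f)^[q] x) - u ((⇑f)^[0] x) := Finset.sum_range_sub (fun k => u ((⇑f)^[k] x)) q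
        _ = 0 := by simp [hq]
    · intro hφ
      refine ⟨⟨fun x => -(1/q) * ∑ j ∈ range q, ∑ k ∈ range j, φ ((⇑f)^[k] x),
        continuous_const.mul (continuous_finset_sum _ fun j _ =>
          continuous_finset_sum _ fun k _ =>
            φ.continuous.comp (f.continuous.iterate k))⟩, ?_⟩
      intro x
      simp only [ContinuousMap.coe_mk]
      set T : ℕ → ℝ := fun j => ∑ k ∈ range j, φ ((⇑f)^[k] x) with hT
      have hstep : ∀ j : ℕ, ∑ k ∈ range j, φ ((⇑f)^[k] (f x)) = T (j+1) - φ x := by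
        intro j
        rw [hT]
        simp only
        rw [Finset.sum_range_succ']
        simp only [Function.iterate_zero_apply, add_sub_cancel_right]
        exact Finset.sum_congr rfl fun k _ => by rw [Function.iterate_succ_apply]
      rw [Finset.sum_congr rfl fun j _ => hstep j]
      have hT0 : T 0 = 0 := by simp [hT]
      have hTq : T q = 0 := hφ x
      have h1 : ∑ j ∈ range q, T (j+1) = ∑ j ∈ range q, T j := by
        have := Finset.sum_range_succ' T q
        have h2 := Finset.sum_range_succ T q
        rw [h2] at this
        rw [hT0, hTq] at this
        linarith
      rw [Finset.sum_sub_distrib, h1, Finset.sum_const, Finset.card_range, nsmul_eq_mul]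
      have hq0 : (q : ℝ) ≠ 0 := Nat.cast_ne_zero.mpr (by omega)
      field_simp
      ring
  rw [hset]
  refine isClosed_iInter fun x => isClosed_eq ?_ continuous_const
  exact continuous_finset_sum _ fun k _ => continuous_eval_const _

lemma exists_long_orbit {M : Type*} (f : M → M) (hf : Function.Injective f)
    (h : ∀ q : ℕ, 1 ≤ q → f^[q] ≠ id) (n : ℕ) :
    ∃ x : M, ∀ i j, i ≤ n → j ≤ n → f^[i] x = f^[j] x → i = j := by
  by_contra hc
  push_neg at hc
  have key : ∀ x : M, ∃ p, 1 ≤ p ∧ p ≤ n ∧ f^[p] x = x := by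
    intro x
    obtain ⟨i, j, hi, hj, hij, hne⟩ := hc x
    have main : ∀ a b : ℕ, a < b → b ≤ n → f^[a] x = f^[b] x →
        ∃ p, 1 ≤ p ∧ p ≤ n ∧ f^[p] x = x := by
      intro a b hab hbn he
      refine ⟨b - a, by omega, by omega, ?_⟩
      have hinj : Function.Injective f^[a] := hf.iterate a
      apply hinj
      rw [← Function.iterate_add_apply]
      rw [show a + (b - a) = b by omega]
      exact he.symm
    rcases Nat.lt_or_ge i j with hlt | hge
    · exact main i j hlt hj hij
    · exact main j i (by omega) hi hij.symm
  refine h n.factorial n.factorial_pos (funext fun x => ?_)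
  obtain ⟨p, hp1, hpn, hpx⟩ := key x
  have hd : p ∣ n.factorial := Nat.dvd_factorial hp1 hpn
  obtain ⟨m, hm⟩ := hd
  rw [hm, Function.iterate_mul]
  simp only [id_eq]
  exact Function.iterate_fixed hpx m

set_option maxHeartbeats 2000000 in
/-- **Theorem A.** A homeomorphism `f` of a compact metric space is cohomologically
`C⁰`-stable (its space of continuous coboundaries is closed in the uniform norm) if and
only if `f` is periodic. -/
theorem coboundaries_closed_iff_periodic
    {M : Type*} [MetricSpace M] [CompactSpace M] (f : M ≃ₜ M) :
    IsClosed {φ : C(M, ℝ) | ∃ u : C(M, ℝ), ∀ x, φ x = u (f x) - u x} ↔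
      ∃ q : ℕ, 1 ≤ q ∧ (⇑f)^[q] = id := by
  constructor
  · intro hclosed
    by_contra hnp
    push_neg at hnp
    classical
    set fC : C(M, M) := ⟨⇑f, f.continuous⟩ with hfC
    set Tlin : C(M, ℝ) →ₗ[ℝ] C(M, ℝ) :=
      { toFun := fun u => u.comp fC - u
        map_add' := by intro u v; ext x; simp [hfC]; ring
        map_smul' := by intro c u; ext x; simp [hfC]; ring } with hTlin
    have Tbound : ∀ u : C(M, ℝ), ‖Tlin u‖ ≤ 2 * ‖u‖ := by
      intro u
      have h1 : ‖u.comp fC‖ ≤ ‖u‖ := by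
        refine (ContinuousMap.norm_le _ (norm_nonneg u)).mpr fun x => ?_
        exact ContinuousMap.norm_coe_le_norm u (fC x)
      calc ‖Tlin u‖ = ‖u.comp fC - u‖ := rfl
        _ ≤ ‖u.comp fC‖ + ‖u‖ := norm_sub_le _ _
        _ ≤ 2 * ‖u‖ := by linarith
    set T : C(M, ℝ) →L[ℝ] C(M, ℝ) := Tlin.mkContinuous 2 Tbound with hTdef
    set p : Submodule ℝ C(M, ℝ) := LinearMap.range Tlin with hp
    have hpS : (p : Set C(M, ℝ)) = {φ : C(M, ℝ) | ∃ u : C(M, ℝ), ∀ x, φ x = u (f x) - u x} := by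
      ext φ
      simp only [hp, SetLike.mem_coe, LinearMap.mem_range, Set.mem_setOf_eq]
      constructor
      · rintro ⟨u, rfl⟩
        exact ⟨u, fun x => rfl⟩
      · rintro ⟨u, hu⟩
        exact ⟨u, by ext x; exact (hu x).symm⟩
    have hpc : IsClosed (p : Set C(M, ℝ)) := hpS ▸ hclosed
    haveI : CompleteSpace p := hpc.completeSpace_coe
    set T' : C(M, ℝ) →L[ℝ] p := T.codRestrict p (fun u => LinearMap.mem_range_self Tlin u)
      with hT'
    have hsurj : LinearMap.range (T' : C(M, ℝ) →ₗ[ℝ] p) = ⊤ := by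
      rw [LinearMap.range_eq_top]
      rintro ⟨φ, hφ⟩
      obtain ⟨u, hu⟩ := hφ
      exact ⟨u, Subtype.ext hu⟩
    obtain ⟨C, hCpos, hsol⟩ := ContinuousLinearMap.exists_preimage_norm_le (𝕜 := ℝ) (𝕜' := ℝ) (σ := RingHom.id ℝ) (σ' := RingHom.id ℝ) (E := C(M, ℝ)) (F := p) T' (LinearMap.range_eq_top.mp hsurj)
    -- choose n with 2*C < n
    obtain ⟨n, hnC, hn1⟩ : ∃ n : ℕ, 2*C < (n : ℝ) ∧ 1 ≤ n := by
      refine ⟨⌈2*C⌉₊ + 1, ?_, by omega⟩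
      calc 2*C ≤ (⌈2*C⌉₊ : ℝ) := Nat.le_ceil _
        _ < ((⌈2*C⌉₊ + 1 : ℕ) : ℝ) := by exact_mod_cast Nat.lt_succ_self _
    obtain ⟨N, hN⟩ : ∃ N : ℕ, N = 2 * n := ⟨2 * n, rfl⟩
    obtain ⟨x, hdist⟩ := exists_long_orbit (⇑f) f.injective hnp N
    set pts : ℕ → M := fun k => (⇑f)^[k] x with hptsdef
    have hpts_ne : ∀ i j, i ≤ N → j ≤ N → i ≠ j → pts i ≠ pts j :=
      fun i j hi hj hne he => hne (hdist i j hi hj he)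
    obtain ⟨ε, hε, hsep⟩ : ∃ ε > 0, ∀ i j, i ≤ N → j ≤ N → i ≠ j →
        ε ≤ dist (pts i) (pts j) := by
      set s := ((Finset.range (N+1)) ×ˢ (Finset.range (N+1))).filter (fun p => p.1 ≠ p.2) with hs
      have hsne : s.Nonempty := ⟨(0, 1), by simp [hs]; omega⟩
      refine ⟨s.inf' hsne (fun p => dist (pts p.1) (pts p.2)), ?_, ?_⟩
      · rw [gt_iff_lt, Finset.lt_inf'_iff]
        rintro ⟨i, j⟩ hp
        simp only [hs, Finset.mem_filter, Finset.mem_product, Finset.mem_range] at hp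
        exact dist_pos.mpr (hpts_ne i j (by omega) (by omega) hp.2)
      · intro i j hi hj hne
        have hmem : (i, j) ∈ s := by
          rw [hs]
          simp only [Finset.mem_filter, Finset.mem_product, Finset.mem_range]
          exact ⟨⟨by omega, by omega⟩, hne⟩
        exact Finset.inf'_le _ hmem
    obtain ⟨δ, hδpos, hδ⟩ : ∃ δ > 0, ∀ k, k ≤ N → ∀ z, dist z x < δ →
        dist ((⇑f)^[k] z) (pts k) < ε/2 := by
      have hk : ∀ k : ℕ, ∃ d > 0, ∀ z, dist z x < d → dist ((⇑f)^[k] z) (pts k) < ε/2 := by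
        intro k
        have hc : ContinuousAt (⇑f)^[k] x := (f.continuous.iterate k).continuousAt
        rw [Metric.continuousAt_iff] at hc
        obtain ⟨d, hd, hdd⟩ := hc (ε/2) (by positivity)
        exact ⟨d, hd, fun z hz => hdd hz⟩
      choose Δ hΔpos hΔ using hk
      refine ⟨(Finset.range (N+1)).inf' Finset.nonempty_range_add_one Δ, ?_, ?_⟩
      · rw [gt_iff_lt, Finset.lt_inf'_iff]; exact fun k _ => hΔpos k
      · intro k hkN z hz
        exact hΔ k z (lt_of_lt_of_le hz (Finset.inf'_le _ (by simp only [Finset.mem_range]; omega)))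
    -- bump function
    set hfun : C(M, ℝ) := ⟨fun y => max 0 (1 - dist y x / δ),
      continuous_const.max ((continuous_const.sub
        ((continuous_id.dist continuous_const).div_const δ)))⟩ with hhdef
    have hh0 : ∀ z, 0 ≤ hfun z := fun z => le_max_left 0 _
    have hh1 : ∀ z, hfun z ≤ 1 := by
      intro z
      refine max_le zero_le_one ?_
      have : 0 ≤ dist z x / δ := by positivity
      linarith
    have hhx : hfun x = 1 := by simp [hhdef]
    have hhsupp : ∀ z, hfun z ≠ 0 → dist z x < δ := by
      intro z hz
      by_contra hge
      push_neg at hge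
      apply hz
      simp only [hhdef, ContinuousMap.coe_mk]
      have h1 : 1 - dist z x / δ ≤ 0 := by
        rw [sub_nonpos]
        rw [le_div_iff₀ hδpos]
        linarith
      exact max_eq_left h1
    -- left inverse facts
    have hfli : ∀ (k : ℕ) (w : M), (⇑f)^[k] ((⇑f.symm)^[k] w) = w :=
      fun k => (Function.LeftInverse.iterate f.apply_symm_apply k)
    have hfli' : ∀ (k : ℕ) (w : M), (⇑f.symm)^[k] ((⇑f)^[k] w) = w :=
      fun k => (Function.LeftInverse.iterate f.symm_apply_apply k)
    -- the key disjointness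
    have keyD : ∀ (y : M) (i j : ℕ), i ≤ N → j ≤ N →
        hfun ((⇑f.symm)^[i] y) ≠ 0 → hfun ((⇑f.symm)^[j] y) ≠ 0 → i = j := by
      intro y i j hi hj hhi hhj
      by_contra hne
      have d1 : dist ((⇑f)^[i] ((⇑f.symm)^[i] y)) (pts i) < ε/2 :=
        hδ i hi _ (hhsupp _ hhi)
      have d2 : dist ((⇑f)^[j] ((⇑f.symm)^[j] y)) (pts j) < ε/2 :=
        hδ j hj _ (hhsupp _ hhj)
      rw [hfli] at d1 d2
      have := hsep i j hi hj hne
      have htri : dist (pts i) (pts j) ≤ dist (pts i) y + dist y (pts j) := dist_triangle _ _ _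
      rw [dist_comm (pts i) y] at htri
      linarith
    -- the function g
    set g : ℕ → ℝ := fun k => ((min k (N - k) : ℕ) : ℝ) with hgdef
    have hg0 : g 0 = 0 := by simp [hgdef]
    have hgN : g N = 0 := by simp [hgdef]
    have hgn : g n = n := by
      simp only [hgdef, hN]
      norm_num [show 2*n - n = n by omega]
    have hgdiff : ∀ k, |g (k+1) - g k| ≤ 1 := by
      intro k
      have h1 : min (k+1) (N-(k+1)) ≤ min k (N-k) + 1 := by omega
      have h2 : min k (N-k) ≤ min (k+1) (N-(k+1)) + 1 := by omega
      have c1 : ((min (k+1) (N-(k+1)) : ℕ) : ℝ) ≤ ((min k (N-k) : ℕ) : ℝ) + 1 := by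
        exact_mod_cast h1
      have c2 : ((min k (N-k) : ℕ) : ℝ) ≤ ((min (k+1) (N-(k+1)) : ℕ) : ℝ) + 1 := by
        exact_mod_cast h2
      rw [abs_le]
      constructor <;> simp only [hgdef] <;> linarith
    -- the function u
    set u : C(M, ℝ) := ⟨fun y => ∑ k ∈ range (N+1), g k * hfun ((⇑f.symm)^[k] y),
      continuous_finset_sum _ fun k _ =>
        continuous_const.mul (hfun.continuous.comp (f.symm.continuous.iterate k))⟩ with hudef
    have hu0 : u x = 0 := by
      simp only [hudef, ContinuousMap.coe_mk]
      refine Finset.sum_eq_zero fun k hk => ?_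
      rcases Nat.eq_zero_or_pos k with rfl | hkpos
      · rw [hg0, zero_mul]
      · have hzero : hfun ((⇑f.symm)^[k] x) = 0 := by
          by_contra hnz
          have h0 : hfun ((⇑f.symm)^[0] x) ≠ 0 := by
            simp only [Function.iterate_zero_apply, hhx]; norm_num
          have := keyD x k 0 (by simp at hk; omega) (by omega) hnz h0
          omega
        rw [hzero, mul_zero]
    have hun : u (pts n) = n := by
      simp only [hudef, ContinuousMap.coe_mk]
      have hsymn : (⇑f.symm)^[n] (pts n) = x := hfli' n x
      rw [Finset.sum_eq_single_of_mem n (by simp only [Finset.mem_range]; omega)]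
      · rw [hsymn, hhx, mul_one, hgn]
      · intro k hk hkn
        have hzero : hfun ((⇑f.symm)^[k] (pts n)) = 0 := by
          by_contra hnz
          have hn0 : hfun ((⇑f.symm)^[n] (pts n)) ≠ 0 := by rw [hsymn, hhx]; norm_num
          have := keyD (pts n) k n (by simp at hk; omega) (by omega) hnz hn0
          omega
        rw [hzero, mul_zero]
    -- the coboundary bound
    have huf : ∀ y, u (f y) - u y = ∑ k ∈ range N, (g (k+1) - g k) * hfun ((⇑f.symm)^[k] y) := by
      intro y
      simp only [hudef, ContinuousMap.coe_mk]
      have e1 : ∑ k ∈ range (N+1), g k * hfun ((⇑f.symm)^[k] (f y))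
          = ∑ k ∈ range N, g (k+1) * hfun ((⇑f.symm)^[k] y) := by
        rw [Finset.sum_range_succ']
        simp only [Function.iterate_zero_apply, hg0, zero_mul, add_zero]
        refine Finset.sum_congr rfl fun k _ => ?_
        rw [Function.iterate_succ_apply, f.symm_apply_apply]
      have e2 : ∑ k ∈ range (N+1), g k * hfun ((⇑f.symm)^[k] y)
          = ∑ k ∈ range N, g k * hfun ((⇑f.symm)^[k] y) := by
        rw [Finset.sum_range_succ, hgN, zero_mul, add_zero]
      rw [e1, e2, ← Finset.sum_sub_distrib]
      exact Finset.sum_congr rfl fun k _ => by ring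
    have hφb : ∀ y, |u (f y) - u y| ≤ 1 := by
      intro y
      rw [huf y]
      by_cases hz : ∀ k ∈ range N, hfun ((⇑f.symm)^[k] y) = 0
      · rw [Finset.sum_eq_zero fun k hk => by rw [hz k hk, mul_zero]]
        norm_num
      · push_neg at hz
        obtain ⟨k0, hk0mem, hk0⟩ := hz
        rw [Finset.sum_eq_single_of_mem k0 hk0mem]
        · rw [abs_mul]
          have := hgdiff k0
          have h1 := hh0 ((⇑f.symm)^[k0] y)
          have h2 := hh1 ((⇑f.symm)^[k0] y)
          have : |hfun ((⇑f.symm)^[k0] y)| ≤ 1 := by rw [abs_of_nonneg h1]; exact h2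
          calc |g (k0+1) - g k0| * |hfun ((⇑f.symm)^[k0] y)| ≤ 1 * 1 := by
                apply mul_le_mul (hgdiff k0) this (abs_nonneg _) zero_le_one
            _ = 1 := by norm_num
        · intro k hk hkne
          have hzero : hfun ((⇑f.symm)^[k] y) = 0 := by
            by_contra hnz
            exact hkne (keyD y k k0 (by simp at hk; omega) (by simp at hk0mem; omega) hnz hk0)
          rw [hzero, mul_zero]
    -- φ is a coboundary of norm ≤ 1
    set φ : C(M, ℝ) := Tlin u with hφdef
    have hφy : ∀ y, φ y = u (f y) - u y := fun y => rfl
    have hφnorm : ‖φ‖ ≤ 1 := by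
      refine (ContinuousMap.norm_le _ zero_le_one).mpr fun y => ?_
      rw [hφy y, Real.norm_eq_abs]
      exact hφb y
    have hmem : φ ∈ p := LinearMap.mem_range_self Tlin u
    obtain ⟨v, hv, hvnorm⟩ := hsol ⟨φ, hmem⟩
    have hveq : ∀ y, v (f y) - v y = u (f y) - u y := by
      intro y
      have h1 : (T' v : C(M, ℝ)) = φ := by rw [hv]
      have h2 : Tlin v = φ := h1
      have := congrFun (congrArg (fun (w : C(M, ℝ)) => (w : M → ℝ)) h2) y
      rw [← hφy y]; exact this
    have hinv : ∀ m : ℕ, u ((⇑f)^[m] x) - v ((⇑f)^[m] x) = u x - v x := by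
      intro m
      induction m with
      | zero => simp
      | succ m ih =>
        rw [Function.iterate_succ_apply']
        have := hveq ((⇑f)^[m] x)
        linarith
    have hnormφ' : ‖(⟨φ, hmem⟩ : p)‖ = ‖φ‖ := rfl
    have hvC : ‖v‖ ≤ C := by
      calc ‖v‖ ≤ C * ‖(⟨φ, hmem⟩ : p)‖ := hvnorm
        _ = C * ‖φ‖ := by rw [hnormφ']
        _ ≤ C * 1 := by nlinarith
        _ = C := mul_one C
    have hfinal := hinv n
    have hptsn : (⇑f)^[n] x = pts n := rfl
    rw [hptsn, hun, hu0] at hfinal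
    have hv1 : |v (pts n)| ≤ C := le_trans (ContinuousMap.norm_coe_le_norm v (pts n)) hvC
    have hv2 : |v x| ≤ C := le_trans (ContinuousMap.norm_coe_le_norm v x) hvC
    rw [abs_le] at hv1 hv2
    have : (n : ℝ) ≤ 2*C := by linarith
    linarith
  · rintro ⟨q, hq1, hq⟩
    exact closed_of_periodic f q hq1 hq
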